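/- Let G be a σ-pro-p-group. Then for every a ∈ G there exist b ∈ G⁺ and c ∈ G with b = c · a · σ(c)⁻¹; moreover, if b, b' ∈ G⁺ satisfy b' = c · b · σ(c)⁻¹ for some c ∈ G, then there exists d ∈ G⁺ with b' = d · b · d⁻¹. (Equivalently: every element aσ of the semidirect product G ⋊ {1,σ} is conjugate to bσ for some b ∈ G⁺, and this b is unique up to conjugation by G⁺.) -/

import Mathlib

open Filter Topology Subgroup

section Aux

variable {G : Type*} [Group G] [TopologicalSpace G] [IsTopologicalGroup G]
    [CompactSpace G] [T2Space G] [TotallyDisconnectedSpace G]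

/-- In a pro-`p` group, `g ^ (p ^ n) → 1`. -/
lemma propG_pow_tendsto {p : ℕ} (hp : p.Prime)
    (hGpro : ∀ U : Subgroup G, U.Normal → IsOpen (U : Set G) → ∃ n : ℕ, U.index = p ^ n)
    (g : G) : Tendsto (fun n : ℕ => g ^ (p ^ n)) atTop (𝓝 1) := by
  rw [(nhds_basis_clopen (1 : G)).tendsto_right_iff]
  rintro V ⟨h1V, hV⟩
  obtain ⟨H, hH⟩ := IsTopologicalGroup.exist_openNormalSubgroup_sub_clopen_nhds_of_one hV h1V
  obtain ⟨k, hk⟩ := hGpro H.toSubgroup H.isNormal' H.toOpenSubgroup.isOpen'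
  have hmemk : g ^ (p ^ k) ∈ H.toSubgroup := by
    have h1 : ((g : G ⧸ H.toSubgroup)) ^ (p ^ k) = 1 := by
      have : Nat.card (G ⧸ H.toSubgroup) = p ^ k := hk
      rw [← this]
      exact pow_card_eq_one'
    rwa [← QuotientGroup.mk_pow, QuotientGroup.eq_one_iff] at h1
  filter_upwards [eventually_ge_atTop k] with n hn
  have : g ^ (p ^ n) = (g ^ (p ^ k)) ^ (p ^ (n - k)) := by
    rw [← pow_mul, ← pow_add, Nat.add_sub_cancel' hn]
  rw [this]
  exact hH (pow_mem hmemk _)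

/-- In a pro-`p` group with `p` odd, `x ^ 2 = 1 → x = 1`. -/
lemma propG_sq_eq_one {p : ℕ} (hp : p.Prime) (hodd : Odd p)
    (hGpro : ∀ U : Subgroup G, U.Normal → IsOpen (U : Set G) → ∃ n : ℕ, U.index = p ^ n)
    {x : G} (hx : x ^ 2 = 1) : x = 1 := by
  have hB := propG_pow_tendsto hp hGpro x
  have hconst : ∀ n : ℕ, x ^ (p ^ n) = x := by
    intro n
    obtain ⟨m, hm⟩ := hodd.pow (n := n)
    rw [hm, pow_add, pow_mul, hx, one_pow, one_mul, pow_one]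
  have : Tendsto (fun n : ℕ => x ^ (p ^ n)) atTop (𝓝 x) := by
    simpa [hconst] using (tendsto_const_nhds : Tendsto (fun _ : ℕ => x) atTop (𝓝 x))
  exact tendsto_nhds_unique this hB

/-- Elements of the closure of a cyclic subgroup commute. -/
lemma closure_zpowers_comm {g x y : G}
    (hx : x ∈ (zpowers g).topologicalClosure) (hy : y ∈ (zpowers g).topologicalClosure) :
    x * y = y * x := by
  have hx' : x ∈ _root_.closure (zpowers g : Set G) := hx
  have hy' : y ∈ _root_.closure (zpowers g : Set G) := hy
  have key : ∀ z ∈ (zpowers g : Set G), ∀ w ∈ _root_.closure (zpowers g : Set G),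
      z * w = w * z := by
    rintro z hz w hw
    have hC : IsClosed {w : G | z * w = w * z} :=
      isClosed_eq (continuous_mul_left z) (continuous_mul_right z)
    refine hC.closure_subset_iff.mpr ?_ hw
    rintro _ ⟨k, rfl⟩
    obtain ⟨j, rfl⟩ := hz
    exact ((Commute.refl g).zpow_zpow j k).eq
  have hC : IsClosed {w : G | w * y = y * w} :=
    isClosed_eq (continuous_mul_right y) (continuous_mul_left y)
  exact hC.closure_subset_iff.mpr (fun z hz => key z hz y hy') hx'

/-- A continuous homomorphism maps the closure of a cyclic subgroup into the closure
of the cyclic subgroup generated by the image of the generator. -/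
lemma mapClosure_zpowers (f : G →* G) (hf : Continuous f) {g x : G}
    (hx : x ∈ (zpowers g).topologicalClosure) :
    f x ∈ (zpowers (f g)).topologicalClosure := by
  have hx' : x ∈ _root_.closure (zpowers g : Set G) := hx
  have h1 : f '' _root_.closure (zpowers g : Set G) ⊆
      _root_.closure (f '' (zpowers g : Set G)) := image_closure_subset_closure_image hf
  have h2 : f '' (zpowers g : Set G) ⊆ (zpowers (f g) : Set G) := by
    rintro _ ⟨_, ⟨k, rfl⟩, rfl⟩
    exact ⟨k, (map_zpow f g k).symm⟩
  have : f x ∈ _root_.closure (zpowers (f g) : Set G) :=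
    closure_mono h2 (h1 ⟨x, hx', rfl⟩)
  exact this

/-- Square roots exist in a pro-`p` group with `p` odd, inside the closed procyclic
subgroup generated by the element. -/
lemma propG_sqrt {p : ℕ} (hp : p.Prime) (hodd : Odd p)
    (hGpro : ∀ U : Subgroup G, U.Normal → IsOpen (U : Set G) → ∃ n : ℕ, U.index = p ^ n)
    (g : G) : ∃ h : G, h ∈ (zpowers g).topologicalClosure ∧ h ^ 2 = g := by
  set c : ℕ → G := fun n => g ^ ((p ^ n + 1) / 2) with hc
  have hmem : ∀ n, c n ∈ ((zpowers g).topologicalClosure : Set G) := by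
    intro n
    refine Subgroup.le_topologicalClosure _ (Subgroup.mem_zpowers_iff.mpr ⟨((p ^ n + 1) / 2 : ℕ), ?_⟩)
    rw [zpow_natCast]
  have hTcomp : IsCompact ((zpowers g).topologicalClosure : Set G) :=
    (Subgroup.isClosed_topologicalClosure _).isCompact
  have hle : map c atTop ≤ 𝓟 ((zpowers g).topologicalClosure : Set G) := by
    rw [le_principal_iff, Filter.mem_map]
    exact Eventually.of_forall hmem
  obtain ⟨h, hhT, hcl⟩ := hTcomp.exists_clusterPt hle
  refine ⟨h, hhT, ?_⟩
  have hsq : Tendsto (fun n : ℕ => (c n) ^ 2) atTop (𝓝 g) := by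
    have heq : ∀ n : ℕ, (c n) ^ 2 = g ^ (p ^ n) * g := by
      intro n
      have h2 : (p ^ n + 1) / 2 * 2 = p ^ n + 1 :=
        Nat.div_mul_cancel ((hodd.pow (n := n)).add_one.two_dvd)
      rw [hc, ← pow_mul, h2, pow_succ]
    simp only [heq]
    simpa using (propG_pow_tendsto hp hGpro g).mul (tendsto_const_nhds (x := g))
  have hmc : MapClusterPt h atTop c := hcl
  have h2cl : MapClusterPt (h ^ 2) atTop ((fun x : G => x ^ 2) ∘ c) :=
    hmc.continuousAt_comp (Continuous.continuousAt (continuous_pow 2))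
  have hne : NeBot (𝓝 (h ^ 2) ⊓ 𝓝 g) := by
    have h1 : NeBot (𝓝 (h ^ 2) ⊓ map ((fun x : G => x ^ 2) ∘ c) atTop) := h2cl
    have h2 : map ((fun x : G => x ^ 2) ∘ c) atTop ≤ 𝓝 g := hsq
    exact h1.mono (inf_le_inf_left _ h2)
  exact t2_iff_nhds.mp ‹T2Space G› hne

/-- Uniqueness of square roots inside a closed procyclic subgroup. -/
lemma propG_sqrt_unique {p : ℕ} (hp : p.Prime) (hodd : Odd p)
    (hGpro : ∀ U : Subgroup G, U.Normal → IsOpen (U : Set G) → ∃ n : ℕ, U.index = p ^ n)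
    {g x y : G} (hx : x ∈ (zpowers g).topologicalClosure)
    (hy : y ∈ (zpowers g).topologicalClosure) (hxy : x ^ 2 = y ^ 2) : x = y := by
  have hcomm0 : Commute x y := closure_zpowers_comm hx hy
  have hcomm : Commute x y⁻¹ := hcomm0.inv_right
  have : (x * y⁻¹) ^ 2 = 1 := by
    rw [hcomm.mul_pow, hxy, inv_pow, mul_inv_cancel]
  have h1 := propG_sq_eq_one hp hodd hGpro this
  rwa [mul_inv_eq_one] at h1

end Aux

/-- Let `G` be a `σ`-pro-`p`-group. Then every `a ∈ G` can be
written as `b = c * a * σ(c)⁻¹` with `b ∈ G⁺` and `c ∈ G` (i.e. `aσ` is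
conjugate in `G ⋊ {1, σ}` to `bσ` with `b ∈ G⁺`); moreover if `b, b' ∈ G⁺`
satisfy `b' = c * b * σ(c)⁻¹` for some `c ∈ G`, then `b' = d * b * d⁻¹` for
some `d ∈ G⁺` (i.e. `b` is unique up to conjugation by `G⁺`). -/
theorem sigma_pro_p_group_twisted_conj
    {p : ℕ} (hp : p.Prime) (hodd : Odd p)
    {G : Type*} [Group G] [TopologicalSpace G] [IsTopologicalGroup G]
    [CompactSpace G] [T2Space G] [TotallyDisconnectedSpace G]
    (hGpro : ∀ U : Subgroup G, U.Normal → IsOpen (U : Set G) → ∃ n : ℕ, U.index = p ^ n)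
    (σ : G ≃* G) (hσcont : Continuous σ) (hσ : ∀ a, σ (σ a) = a) :
    (∀ a : G, ∃ b c : G, σ b = b ∧ b = c * a * (σ c)⁻¹) ∧
    (∀ b b' : G, σ b = b → σ b' = b' → (∃ c : G, b' = c * b * (σ c)⁻¹) →
      ∃ d : G, σ d = d ∧ b' = d * b * d⁻¹) := by
  have hconjcont : ∀ u : G, Continuous fun x : G => (MulAut.conj u).toMonoidHom x := by
    intro u
    simp only [MulEquiv.coe_toMonoidHom, MulAut.conj_apply]
    exact ((continuous_mul_left u).comp continuous_id).mul continuous_const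
  constructor
  · -- Existence part
    intro a
    set s := a * σ a with hs
    have hσs : σ s = a⁻¹ * s * a := by
      rw [hs, map_mul, hσ]
      group
    obtain ⟨w, hwT, hw2⟩ := propG_sqrt hp hodd hGpro s
    -- σ w = a⁻¹ * w * a
    have hσw : σ w = a⁻¹ * w * a := by
      have h1 : σ w ∈ (zpowers (σ s)).topologicalClosure :=
        mapClosure_zpowers σ.toMonoidHom hσcont hwT
      have h2 : (MulAut.conj a).toMonoidHom (σ w) ∈
          (zpowers ((MulAut.conj a).toMonoidHom (σ s))).topologicalClosure :=
        mapClosure_zpowers _ (hconjcont a) h1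
      have h3 : (MulAut.conj a).toMonoidHom (σ s) = s := by
        simp only [MulEquiv.coe_toMonoidHom, MulAut.conj_apply, hσs]
        group
      rw [h3] at h2
      have h4 : ((MulAut.conj a).toMonoidHom (σ w)) ^ 2 = w ^ 2 := by
        simp only [MulEquiv.coe_toMonoidHom, MulAut.conj_apply]
        rw [hw2]
        calc (a * σ w * a⁻¹) ^ 2 = a * (σ w * σ w) * a⁻¹ := by rw [pow_two]; group
        _ = a * σ (w * w) * a⁻¹ := by rw [map_mul]
        _ = a * σ (w ^ 2) * a⁻¹ := by rw [pow_two]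
        _ = a * σ s * a⁻¹ := by rw [hw2]
        _ = s := by rw [hσs]; group
      have h5 := propG_sqrt_unique hp hodd hGpro h2 hwT h4
      simp only [MulEquiv.coe_toMonoidHom, MulAut.conj_apply] at h5
      calc σ w = a⁻¹ * (a * σ w * a⁻¹) * a := by group
      _ = a⁻¹ * w * a := by rw [h5]
    set e := w⁻¹ * a with he
    have hσa' : σ a = a⁻¹ * (w * w) := by
      rw [← pow_two, hw2, hs]; group
    have hσe : σ e = e⁻¹ := by
      rw [he, map_mul, map_inv, hσw, hσa']
      group
    obtain ⟨h0, h0T, h0sq⟩ := propG_sqrt hp hodd hGpro e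
    set c := h0⁻¹ with hc
    have hcT : c ∈ (zpowers e).topologicalClosure := inv_mem h0T
    have hc2 : c ^ 2 = e⁻¹ := by rw [hc, inv_pow, h0sq]
    -- σ c = c⁻¹
    have hσc : σ c = c⁻¹ := by
      have h1 : σ c ∈ (zpowers (σ e)).topologicalClosure :=
        mapClosure_zpowers σ.toMonoidHom hσcont hcT
      rw [hσe, zpowers_inv] at h1
      have h2 : (σ c) ^ 2 = (c⁻¹) ^ 2 := by
        rw [← map_pow, hc2, map_inv, hσe, inv_pow, hc2]
      exact propG_sqrt_unique hp hodd hGpro h1 (inv_mem hcT) h2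
    refine ⟨c * a * (σ c)⁻¹, c, ?_, rfl⟩
    have hcc : c * c = a⁻¹ * w := by
      rw [← pow_two, hc2, he]; group
    have key : c * c * a * (c * c) = σ a := by
      rw [hcc, hσa']
      group
    rw [hσc]
    calc σ (c * a * c⁻¹⁻¹) = σ c * σ a * σ c := by rw [map_mul, map_mul, inv_inv]
    _ = c⁻¹ * σ a * c⁻¹ := by rw [hσc]
    _ = c⁻¹ * (c * c * a * (c * c)) * c⁻¹ := by rw [key]
    _ = c * a * c⁻¹⁻¹ := by group
  · -- Uniqueness part
    rintro b b' hb hb' ⟨c, rfl⟩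
    set g := (σ c)⁻¹ * c with hg
    have hσg : σ g = g⁻¹ := by
      rw [hg, map_mul, map_inv, hσ]
      group
    have heq : σ c * b * c⁻¹ = c * b * (σ c)⁻¹ := by
      have := hb'
      rw [map_mul, map_mul, map_inv, hσ, hb] at this
      exact this
    have hgbg : g * b * g = b := by
      calc g * b * g = (σ c)⁻¹ * (c * b * (σ c)⁻¹) * c := by rw [hg]; group
      _ = (σ c)⁻¹ * (σ c * b * c⁻¹) * c := by rw [heq]
      _ = b := by group
    have hgb : g * b = b * g⁻¹ := by
      calc g * b = (g * b * g) * g⁻¹ := by group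
      _ = b * g⁻¹ := by rw [hgbg]
    have hconj : b⁻¹ * g * b = g⁻¹ := by
      calc b⁻¹ * g * b = b⁻¹ * (g * b) := by group
      _ = b⁻¹ * (b * g⁻¹) := by rw [hgb]
      _ = g⁻¹ := by group
    obtain ⟨h0, h0T, h0sq⟩ := propG_sqrt hp hodd hGpro g
    set h := h0⁻¹ with hh
    have hhT : h ∈ (zpowers g).topologicalClosure := inv_mem h0T
    have hh2 : h ^ 2 = g⁻¹ := by rw [hh, inv_pow, h0sq]
    have hσh : σ h = h⁻¹ := by
      have h1 : σ h ∈ (zpowers (σ g)).topologicalClosure :=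
        mapClosure_zpowers σ.toMonoidHom hσcont hhT
      rw [hσg, zpowers_inv] at h1
      have h2 : (σ h) ^ 2 = (h⁻¹) ^ 2 := by
        rw [← map_pow, hh2, map_inv, hσg, inv_pow, hh2]
      exact propG_sqrt_unique hp hodd hGpro h1 (inv_mem hhT) h2
    have hbhb : b⁻¹ * h * b = h⁻¹ := by
      have h1 : (MulAut.conj b⁻¹).toMonoidHom h ∈
          (zpowers ((MulAut.conj b⁻¹).toMonoidHom g)).topologicalClosure :=
        mapClosure_zpowers _ (hconjcont b⁻¹) hhT
      have h3 : (MulAut.conj b⁻¹).toMonoidHom g = g⁻¹ := by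
        simp only [MulEquiv.coe_toMonoidHom, MulAut.conj_apply, inv_inv]
        exact hconj
      rw [h3, zpowers_inv] at h1
      have h4 : ((MulAut.conj b⁻¹).toMonoidHom h) ^ 2 = (h⁻¹) ^ 2 := by
        simp only [MulEquiv.coe_toMonoidHom, MulAut.conj_apply, inv_inv]
        have : (b⁻¹ * h * b) ^ 2 = b⁻¹ * h ^ 2 * b := by
          rw [pow_two, pow_two]; group
        rw [this, hh2, inv_pow, hh2, inv_inv]
        calc b⁻¹ * g⁻¹ * b = (b⁻¹ * g * b)⁻¹ := by group
        _ = g⁻¹⁻¹ := by rw [hconj]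
        _ = g := inv_inv g
      have h5 := propG_sqrt_unique hp hodd hGpro h1 (inv_mem hhT) h4
      simp only [MulEquiv.coe_toMonoidHom, MulAut.conj_apply, inv_inv] at h5
      exact h5
    have hhbh : h * b * h⁻¹ = b * g := by
      calc h * b * h⁻¹ = b * (b⁻¹ * h * b) * h⁻¹ := by group
      _ = b * h⁻¹ * h⁻¹ := by rw [hbhb]
      _ = b * (h ^ 2)⁻¹ := by group
      _ = b * g := by rw [hh2, inv_inv]
    refine ⟨c * h, ?_, ?_⟩
    · have hσc : σ c = c * g⁻¹ := by rw [hg]; group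
      rw [map_mul, hσh, hσc, ← hh2]
      group
    · calc c * b * (σ c)⁻¹ = c * (b * g) * c⁻¹ := by rw [hg]; group
      _ = c * (h * b * h⁻¹) * c⁻¹ := by rw [hhbh]
      _ = (c * h) * b * (c * h)⁻¹ := by group
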